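/- Let X(θ,z) = (√(1 - cos²θ/z²), sin θ) on Ω = {(θ,z) : z > |cos θ|}, n ∈ ℤ, and let φ : (-b, b) → Ω be an integral curve of X with φ(0) = (nπ, z₀) for some z₀ > 1. Then the curve σ(t) = (2nπ - θ(-t), z(-t)), where φ = (θ, z), is also an integral curve of X defined on (-b, b), and σ(0) = φ(0). -/

import Mathlib

noncomputable def X (p : ℝ × ℝ) : ℝ × ℝ :=
  (Real.sqrt (1 - (Real.cos p.1) ^ 2 / p.2 ^ 2), Real.sin p.1)

def Ω : Set (ℝ × ℝ) := {p | |Real.cos p.1| < p.2}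

lemma cos_refl (n : ℤ) (x : ℝ) : Real.cos (2 * (n : ℝ) * Real.pi - x) = Real.cos x := by
  have : 2 * (n : ℝ) * Real.pi - x = -(x - (n : ℝ) * (2 * Real.pi)) := by ring
  rw [this, Real.cos_neg, Real.cos_sub_int_mul_two_pi]

lemma sin_refl (n : ℤ) (x : ℝ) : Real.sin (2 * (n : ℝ) * Real.pi - x) = -Real.sin x := by
  have : 2 * (n : ℝ) * Real.pi - x = -(x - (n : ℝ) * (2 * Real.pi)) := by ring
  rw [this, Real.sin_neg, Real.sin_sub_int_mul_two_pi]

theorem reflected_integral_curve (b z₀ : ℝ) (n : ℤ) (φ : ℝ → ℝ × ℝ)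
    (hz₀ : 1 < z₀)
    (hφ0 : φ 0 = ((n : ℝ) * Real.pi, z₀))
    (hmem : ∀ t ∈ Set.Ioo (-b) b, φ t ∈ Ω)
    (hint : ∀ t ∈ Set.Ioo (-b) b, HasDerivAt φ (X (φ t)) t) :
    (∀ t ∈ Set.Ioo (-b) b,
      ((2 * (n : ℝ) * Real.pi - (φ (-t)).1, (φ (-t)).2) : ℝ × ℝ) ∈ Ω ∧
      HasDerivAt (fun s => ((2 * (n : ℝ) * Real.pi - (φ (-s)).1, (φ (-s)).2) : ℝ × ℝ))
        (X ((2 * (n : ℝ) * Real.pi - (φ (-t)).1, (φ (-t)).2))) t) ∧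
    ((2 * (n : ℝ) * Real.pi - (φ (-(0:ℝ))).1, (φ (-(0:ℝ))).2) : ℝ × ℝ) = φ 0 := by
  constructor
  · intro t ht
    have ht' : -t ∈ Set.Ioo (-b) b := by
      simp only [Set.mem_Ioo] at ht ⊢; constructor <;> linarith [ht.1, ht.2]
    have hm := hmem (-t) ht'
    constructor
    · simpa [Ω, cos_refl n] using hm
    · have h1 := hint (-t) ht'
      have hneg : HasDerivAt (fun s : ℝ => φ (-s)) ((-1 : ℝ) • X (φ (-t))) t :=
        h1.scomp t (hasDerivAt_neg t)
      have hfst : HasDerivAt (fun s : ℝ => (φ (-s)).1) (((-1 : ℝ) • X (φ (-t))).1) t :=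
        hneg.fst
      have hsnd : HasDerivAt (fun s : ℝ => (φ (-s)).2) (((-1 : ℝ) • X (φ (-t))).2) t :=
        hneg.snd
      have h2 : HasDerivAt (fun s : ℝ => 2 * (n : ℝ) * Real.pi - (φ (-s)).1)
          (-(((-1 : ℝ) • X (φ (-t))).1)) t := hfst.const_sub _
      have := h2.prodMk hsnd
      convert this using 1
      simp only [X, Prod.smul_fst, Prod.smul_snd, smul_eq_mul, cos_refl n, sin_refl n]
      norm_num
  · rw [hφ0]; norm_num [hφ0]; ring
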